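/- (Saito's criterion) Let A be a central arrangement of n hyperplanes in K^l with Q = α_1 ⋯ α_n, and let δ_1, ..., δ_l ∈ D(A). If det(δ_i(x_j)) = c·Q for some nonzero constant c ∈ K, then δ_1, ..., δ_l form a free S-basis of D(A), i.e., D(A) = S·δ_1 ⊕ ⋯ ⊕ S·δ_l. -/

import Mathlib

noncomputable section

variable {K : Type*} [Field K] {l n : ℕ}

/-- The linear form with coefficient vector `a`. -/
def lin (a : Fin l → K) : MvPolynomial (Fin l) K :=
  ∑ j, MvPolynomial.C (a j) * MvPolynomial.X j

/-- The polynomial vector field `δ = ∑_j f_j ∂_{x_j}` (given by its coefficient vector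
`f`) applied to a polynomial `g`. -/
def derApp (f : Fin l → MvPolynomial (Fin l) K) (g : MvPolynomial (Fin l) K) :
    MvPolynomial (Fin l) K :=
  ∑ j, f j * MvPolynomial.pderiv j g

/-- The vector field with coefficient vector `f` is logarithmic for the central
arrangement with defining linear forms `α_k`: `δ(α_k) ∈ (α_k) S` for all `k`. -/
def IsLogDer (α : Fin n → Fin l → K) (f : Fin l → MvPolynomial (Fin l) K) : Prop :=
  ∀ k, lin (α k) ∣ derApp f (lin (α k))

/-- The `α_k` are the defining forms of a central arrangement of `n` distinct
hyperplanes in `K^l`: they are nonzero and pairwise non-proportional. -/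
def IsArrangement (α : Fin n → Fin l → K) : Prop :=
  (∀ k, α k ≠ 0) ∧ ∀ k k', k ≠ k' → ∀ c : K, α k' ≠ c • α k

open MvPolynomial Matrix

lemma coeff_lin (a : Fin l → K) (j : Fin l) :
    MvPolynomial.coeff (Finsupp.single j 1) (lin a) = a j := by
  rw [lin, MvPolynomial.coeff_sum]
  rw [Finset.sum_eq_single j]
  · simp [MvPolynomial.coeff_C_mul, MvPolynomial.coeff_X' ]
  · intro b _ hb
    simp [MvPolynomial.coeff_C_mul, MvPolynomial.coeff_X', Finsupp.single_eq_single_iff, hb]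
  · simp

lemma lin_ne_zero {a : Fin l → K} (ha : a ≠ 0) : lin a ≠ 0 := by
  intro h
  apply ha
  funext j
  have := coeff_lin a j
  rw [h] at this
  simpa using this.symm

lemma aeval_lin (a : Fin l → K) (u : Fin l → MvPolynomial (Fin l) K) :
    MvPolynomial.aeval u (lin a) = ∑ j, MvPolynomial.C (a j) * u j := by
  simp [lin, MvPolynomial.algebraMap_eq]

lemma pderiv_lin (a : Fin l → K) (j : Fin l) :
    MvPolynomial.pderiv j (lin a) = MvPolynomial.C (a j) := by
  rw [lin, _root_.map_sum]
  rw [Finset.sum_eq_single j] <;> simp +contextual [Pi.single_apply]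


open MvPolynomial in
/-- substitution sending `X j₀ ↦ (X j₀ - rest)/(a j₀)`. -/
def wsub (a : Fin l → K) (j₀ : Fin l) : Fin l → MvPolynomial (Fin l) K :=
  fun j => if j = j₀ then
      C ((a j₀)⁻¹) * (X j₀ - ∑ i ∈ Finset.univ.erase j₀, C (a i) * X i)
    else X j

open MvPolynomial in
lemma aeval_wsub_lin (a b : Fin l → K) (j₀ : Fin l) :
    aeval (wsub a j₀) (lin b)
      = lin (fun j => if j = j₀ then b j₀ * (a j₀)⁻¹ else b j - b j₀ * (a j₀)⁻¹ * a j) := by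
  rw [aeval_lin, lin]
  conv_lhs => rw [← Finset.add_sum_erase _ _ (Finset.mem_univ j₀)]
  conv_rhs => rw [← Finset.add_sum_erase _ _ (Finset.mem_univ j₀)]
  rw [show ∑ j ∈ Finset.univ.erase j₀, C (b j) * wsub a j₀ j
      = ∑ j ∈ Finset.univ.erase j₀, C (b j) * X j from
    Finset.sum_congr rfl fun j hj => by rw [wsub, if_neg (Finset.ne_of_mem_erase hj)]]
  rw [show ∑ j ∈ Finset.univ.erase j₀,
        C (if j = j₀ then b j₀ * (a j₀)⁻¹ else b j - b j₀ * (a j₀)⁻¹ * a j) * X j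
      = (∑ j ∈ Finset.univ.erase j₀, C (b j) * X j)
        - C (b j₀) * (C ((a j₀)⁻¹) * ∑ j ∈ Finset.univ.erase j₀, C (a j) * X j) by
    rw [Finset.mul_sum, Finset.mul_sum, ← Finset.sum_sub_distrib]
    refine Finset.sum_congr rfl fun j hj => ?_
    rw [if_neg (Finset.ne_of_mem_erase hj), _root_.map_sub, _root_.map_mul, _root_.map_mul]
    ring]
  rw [wsub, if_pos rfl, if_pos rfl, _root_.map_mul]
  ring

open MvPolynomial in
lemma lin_indicator (j₀ : Fin l) :
    lin (fun j => if j = j₀ then (1:K) else 0) = X j₀ := by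
  rw [lin, Finset.sum_eq_single j₀] <;> simp +contextual

open MvPolynomial in
lemma aeval_wsub_self (a : Fin l → K) (j₀ : Fin l) (ha : a j₀ ≠ 0) :
    aeval (wsub a j₀) (lin a) = X j₀ := by
  rw [aeval_wsub_lin a a j₀, show (fun j => if j = j₀ then a j₀ * (a j₀)⁻¹ else a j - a j₀ * (a j₀)⁻¹ * a j)
      = fun j => if j = j₀ then (1:K) else 0 by
    funext j; split <;> field_simp <;> simp]
  exact lin_indicator j₀

open MvPolynomial in
lemma exists_smul_of_lin_dvd_lin {a b : Fin l → K} (ha : a ≠ 0) (h : lin a ∣ lin b) :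
    ∃ c : K, b = c • a := by
  obtain ⟨j₀, hj₀⟩ := Function.ne_iff.mp ha
  rw [Pi.zero_apply] at hj₀
  refine ⟨b j₀ * (a j₀)⁻¹, ?_⟩
  have hdvd : (X j₀ : MvPolynomial (Fin l) K) ∣
      lin (fun j => if j = j₀ then b j₀ * (a j₀)⁻¹ else b j - b j₀ * (a j₀)⁻¹ * a j) := by
    rw [← aeval_wsub_lin a b j₀, ← aeval_wsub_self a j₀ hj₀]
    exact map_dvd _ h
  obtain ⟨u, hu⟩ := hdvd
  funext j
  by_cases hj : j = j₀
  · subst hj; simp only [Pi.smul_apply, smul_eq_mul]; field_simp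
  · have := coeff_lin (fun j => if j = j₀ then b j₀ * (a j₀)⁻¹ else b j - b j₀ * (a j₀)⁻¹ * a j) j
    rw [hu, if_neg hj, coeff_X_mul'] at this
    rw [if_neg (by simp [Finsupp.support_single_ne_zero, Ne.symm hj])] at this
    have hb : b j = b j₀ * (a j₀)⁻¹ * a j := by linear_combination -this
    simp [hb]

open MvPolynomial in
lemma prime_X_mv {m : ℕ} (i : Fin (m+1)) : Prime (X i : MvPolynomial (Fin (m+1)) K) := by
  rw [← MulEquiv.prime_iff (renameEquiv K (Equiv.swap i 0)).toMulEquiv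
      (p := (X i : MvPolynomial (Fin (m+1)) K))]
  show Prime (renameEquiv K (Equiv.swap i 0) (X i))
  rw [renameEquiv_apply, rename_X, Equiv.swap_apply_left,
    ← MulEquiv.prime_iff (finSuccEquiv K m).toMulEquiv (p := (X 0 : MvPolynomial (Fin (m+1)) K))]
  show Prime (finSuccEquiv K m (X 0))
  rw [finSuccEquiv_X_zero]
  exact Polynomial.prime_X

open MvPolynomial in
lemma prime_lin {a : Fin l → K} (ha : a ≠ 0) : Prime (lin a) := by
  obtain ⟨j₀, hj₀⟩ := Function.ne_iff.mp ha
  rw [Pi.zero_apply] at hj₀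
  cases l with
  | zero => exact absurd (funext fun j => j.elim0) ha
  | succ m =>
    set vsub : Fin (m+1) → MvPolynomial (Fin (m+1)) K :=
      fun j => if j = j₀ then lin a else X j with hv
    have hvj : vsub j₀ = lin a := if_pos rfl
    have hvne : ∀ j, j ≠ j₀ → vsub j = X j := fun j hj => if_neg hj
    have haux : ∀ i ∈ Finset.univ.erase j₀, C (a i) * vsub i = C (a i) * X i :=
      fun i hi => by rw [hv]; simp only [if_neg (Finset.ne_of_mem_erase hi)]
    have h1 : (aeval vsub).comp (aeval (wsub a j₀)) =
        AlgHom.id K (MvPolynomial (Fin (m+1)) K) := by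
      apply algHom_ext
      intro j
      simp only [AlgHom.comp_apply, aeval_X, AlgHom.id_apply]
      by_cases hj : j = j₀
      · subst hj
        rw [wsub, if_pos rfl, _root_.map_mul, _root_.map_sub, aeval_X, aeval_C, _root_.map_sum]
        rw [show ∑ i ∈ Finset.univ.erase j, aeval vsub (C (a i) * X i)
            = ∑ i ∈ Finset.univ.erase j, C (a i) * X i from
          Finset.sum_congr rfl fun i hi => by
            rw [_root_.map_mul, aeval_X, aeval_C, algebraMap_eq, ← haux i hi]]
        rw [hvj]
        rw [show (lin a : MvPolynomial (Fin (m+1)) K)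
            = C (a j) * X j + ∑ i ∈ Finset.univ.erase j, C (a i) * X i from
          (Finset.add_sum_erase _ _ (Finset.mem_univ j)).symm]
        rw [add_sub_cancel_right, ← mul_assoc, algebraMap_eq, ← _root_.map_mul, inv_mul_cancel₀ hj₀, _root_.map_one, one_mul]
      · rw [wsub, if_neg hj, aeval_X, hvne j hj]
    have h2 : (aeval (wsub a j₀)).comp (aeval vsub) =
        AlgHom.id K (MvPolynomial (Fin (m+1)) K) := by
      apply algHom_ext
      intro j
      simp only [AlgHom.comp_apply, aeval_X, AlgHom.id_apply]
      by_cases hj : j = j₀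
      · subst hj
        rw [hvj]
        exact aeval_wsub_self a j hj₀
      · rw [hvne j hj, aeval_X, wsub, if_neg hj]
    set ψ := AlgEquiv.ofAlgHom (aeval vsub) (aeval (wsub a j₀)) h1 h2 with hψ
    have : lin a = ψ (X j₀) := by
      rw [hψ]
      show lin a = aeval vsub (X j₀)
      rw [aeval_X, hvj]
    rw [this]
    exact (MulEquiv.prime_iff ψ.toMulEquiv (p := (X j₀ : MvPolynomial (Fin (m+1)) K))).mpr (prime_X_mv j₀)

lemma prod_primes_dvd'' {R : Type*} [CommMonoidWithZero R] [IsCancelMulZero R] {ι : Type*} (s : Finset ι)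
    (p : ι → R) (N : R) (hp : ∀ k ∈ s, Prime (p k))
    (hassoc : ∀ k ∈ s, ∀ k' ∈ s, k ≠ k' → ¬ Associated (p k) (p k'))
    (hdvd : ∀ k ∈ s, p k ∣ N) : (∏ k ∈ s, p k) ∣ N := by
  induction s using Finset.cons_induction generalizing N with
  | empty => simpa using one_dvd N
  | cons a s ha ih =>
    obtain ⟨m, rfl⟩ := hdvd a (Finset.mem_cons_self a s)
    rw [Finset.prod_cons]
    refine mul_dvd_mul_left _ (ih m (fun k hk => hp k (Finset.mem_cons_of_mem hk))
      (fun k hk k' hk' hne => hassoc k (Finset.mem_cons_of_mem hk) k'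
        (Finset.mem_cons_of_mem hk') hne) (fun k hk => ?_))
    have hk' := hp k (Finset.mem_cons_of_mem hk)
    rcases hk'.2.2 _ _ (hdvd k (Finset.mem_cons_of_mem hk)) with h | h
    · exact absurd (hk'.associated_of_dvd (hp a (Finset.mem_cons_self a s)) h)
        (hassoc k (Finset.mem_cons_of_mem hk) a (Finset.mem_cons_self a s)
          (fun he => ha (he ▸ hk)))
    · exact h

open MvPolynomial in
lemma lin_dvd_det {a : Fin l → K} (ha : a ≠ 0)
    (N : Matrix (Fin l) (Fin l) (MvPolynomial (Fin l) K))
    (h : ∀ i, lin a ∣ ∑ j, C (a j) * N i j) : lin a ∣ N.det := by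
  obtain ⟨j₀, hj₀⟩ := Function.ne_iff.mp ha
  rw [Pi.zero_apply] at hj₀
  choose q hq using fun i => h i
  have key := Matrix.det_updateCol_sum N j₀ (fun i => (C (a i) : MvPolynomial (Fin l) K))
  have h2 : (fun k => ∑ i, (C (a i) : MvPolynomial (Fin l) K) • N k i) = fun k => lin a * q k := by
    funext k
    simpa only [smul_eq_mul] using hq k
  rw [h2] at key
  have h3 : (fun k => lin a * q k) = lin a • q := rfl
  rw [h3, Matrix.det_updateCol_smul, smul_eq_mul] at key
  have hdvd : lin a ∣ C (a j₀) * N.det := key ▸ Dvd.intro _ rfl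
  rcases (prime_lin ha).2.2 _ _ hdvd with h4 | h4
  · exact absurd (isUnit_of_dvd_unit h4 (hj₀.isUnit.map (C : K →+* MvPolynomial (Fin l) K)))
      (prime_lin ha).not_unit
  · exact h4


/-- Saito's criterion: if `δ_1, …, δ_l ∈ D(A)` satisfy `det(δ_i(x_j)) = c · Q` for a
nonzero constant `c ∈ K`, then `δ_1, …, δ_l` are a free `S`-basis of `D(A)`: every
logarithmic vector field is a unique `S`-linear combination of the `δ_i`. -/
theorem saito_criterion (α : Fin n → Fin l → K) (hα : IsArrangement α)
    (δ : Fin l → Fin l → MvPolynomial (Fin l) K) (hδ : ∀ i, IsLogDer α (δ i))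
    (c : K) (hc : c ≠ 0)
    (hdet : (Matrix.of δ).det = MvPolynomial.C c * ∏ k, lin (α k)) :
    ∀ f : Fin l → MvPolynomial (Fin l) K, IsLogDer α f →
      ∃! g : Fin l → MvPolynomial (Fin l) K, f = fun j => ∑ i, g i * δ i j := by
  intro f hf
  classical
  set M := Matrix.of δ with hM
  set Q : MvPolynomial (Fin l) K := ∏ k, lin (α k) with hQdef
  have hQ : Q ≠ 0 := Finset.prod_ne_zero_iff.mpr fun k _ => lin_ne_zero (hα.1 k)
  have hCc : (C c : MvPolynomial (Fin l) K) ≠ 0 := by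
    simpa using hc
  have hdetne : M.det ≠ 0 := by rw [hdet]; exact mul_ne_zero hCc hQ
  have hder : ∀ (v : Fin l → MvPolynomial (Fin l) K) (a : Fin l → K),
      (∑ j, v j * MvPolynomial.pderiv j (lin a)) = ∑ j, C (a j) * v j :=
    fun v a => Finset.sum_congr rfl fun j _ => by rw [pderiv_lin, mul_comm]
  have hQd : ∀ i, ∃ q, (Mᵀ.cramer f) i = Q * q := by
    intro i
    have hdd : Q ∣ (M.updateRow i f).det := by
      refine prod_primes_dvd'' Finset.univ _ _ (fun k _ => prime_lin (hα.1 k)) ?_ ?_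
      · intro k _ k' _ hne hassocc
        obtain ⟨cc, hcc⟩ := exists_smul_of_lin_dvd_lin (hα.1 k) hassocc.dvd
        exact hα.2 k k' hne cc hcc
      · intro k _
        refine lin_dvd_det (hα.1 k) _ (fun i' => ?_)
        by_cases hi : i' = i
        · subst hi
          rw [Matrix.updateRow_self, ← hder]
          exact hf k
        · rw [Matrix.updateRow_ne hi, ← hder]
          exact hδ i' k
    obtain ⟨q, hq⟩ := hdd
    exact ⟨q, by rw [Matrix.cramer_apply, Matrix.updateCol_transpose,
      Matrix.det_transpose, hq]⟩
  choose q hq using hQd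
  have hcr := Matrix.mulVec_cramer Mᵀ f
  have hgf : f = fun j => ∑ i, (C c⁻¹ * q i) * δ i j := by
    funext j
    have h1 := congrFun hcr j
    simp only [Matrix.mulVec, dotProduct, Matrix.transpose_apply, Pi.smul_apply,
      smul_eq_mul, Matrix.det_transpose] at h1
    rw [hdet, Finset.sum_congr rfl (fun i _ => by rw [hq i])] at h1
    have h2 : Q * (∑ i, q i * M i j) = Q * (C c * f j) := by
      rw [Finset.mul_sum, Finset.sum_congr rfl (fun i (_ : i ∈ Finset.univ) =>
        show Q * (q i * M i j) = M i j * (Q * q i) by ring), h1]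
      ring
    have h3 := mul_left_cancel₀ hQ h2
    have h4 : (C c⁻¹ : MvPolynomial (Fin l) K) * (C c * f j) = f j := by
      rw [← mul_assoc, ← C_mul, inv_mul_cancel₀ hc, C_1, one_mul]
    rw [← h4, ← h3, Finset.mul_sum]
    exact Finset.sum_congr rfl fun i _ =>
      show C c⁻¹ * (q i * M i j) = (C c⁻¹ * q i) * M i j by ring
  refine ⟨fun i => C c⁻¹ * q i, hgf, ?_⟩
  intro g' hg'
  have hvec : (g' - fun i => C c⁻¹ * q i) ᵥ* M = 0 := by
    funext j
    have e1 := congrFun hg' j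
    have e2 := congrFun hgf j
    simp only [Matrix.vecMul, dotProduct, Pi.sub_apply, sub_mul,
      Finset.sum_sub_distrib, Pi.zero_apply]
    show (∑ i, g' i * δ i j) - (∑ i, (C c⁻¹ * q i) * δ i j) = 0
    rw [← e1, ← e2, sub_self]
  have h0 := Matrix.eq_zero_of_vecMul_eq_zero hdetne hvec
  exact sub_eq_zero.mp h0

end
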